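/- Let n ≥ 1, λ > 0, let F : (Fin n → ℝ) → ℝ be differentiable at a point x with gradient ∇F(x) (with respect to the Euclidean inner product), and suppose |xᵢ| ≤ 1/λ for all i. Define the Frank–Wolfe gap 𝒢(x) := sup { ⟨v − x, −∇F(x)⟩ : v : Fin n → ℝ with |vᵢ| ≤ 1/λ for all i }. Then 𝒢(x) = 0 if and only if ⟨−λ·x, ∇F(x)⟩ = ∑ᵢ |(∇F(x))ᵢ|, i.e., if and only if x satisfies the KKT characterization ⟨−λx, ∇F(x)⟩ = ‖∇F(x)‖₁ of the constrained problem min_{‖x‖∞ ≤ 1/λ} F(x). -/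

import Mathlib

/-- Vanishing of the Frank–Wolfe gap over the ℓ∞-ball of radius `1/λ` at a feasible
point `x` is equivalent to the KKT characterization `⟨−λx, ∇F(x)⟩ = ‖∇F(x)‖₁` of the
problem `min_{‖x‖∞ ≤ 1/λ} F(x)`. -/
theorem frankWolfe_gap_zero_iff_kkt (n : ℕ) (hn : 1 ≤ n) (lam : ℝ) (hlam : 0 < lam)
    (F : (Fin n → ℝ) → ℝ) (x : Fin n → ℝ) (gradF : Fin n → ℝ)
    (φ : (Fin n → ℝ) →L[ℝ] ℝ) (hdiff : HasFDerivAt F φ x)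
    (hφ : ∀ v : Fin n → ℝ, φ v = ∑ i : Fin n, gradF i * v i)
    (hfeas : ∀ i, |x i| ≤ 1 / lam) :
    sSup {r : ℝ | ∃ v : Fin n → ℝ, (∀ i, |v i| ≤ 1 / lam) ∧
        r = ∑ i : Fin n, (v i - x i) * (-(gradF i))} = 0 ↔
      ∑ i : Fin n, (-(lam * x i)) * gradF i = ∑ i : Fin n, |gradF i| := by
  have hlne : lam ≠ 0 := hlam.ne'
  set A : ℝ := ∑ i : Fin n, |gradF i| with hA
  set B : ℝ := ∑ i : Fin n, x i * gradF i with hB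
  have key : IsGreatest {r : ℝ | ∃ v : Fin n → ℝ, (∀ i, |v i| ≤ 1 / lam) ∧
      r = ∑ i : Fin n, (v i - x i) * (-(gradF i))} ((1 / lam) * A + B) := by
    constructor
    · refine ⟨fun i => if 0 ≤ gradF i then -(1 / lam) else 1 / lam, ?_, ?_⟩
      · intro i
        have h1 : (0:ℝ) ≤ 1 / lam := by positivity
        dsimp only
        split <;> simp [abs_le, neg_le_self h1, le_refl, h1] <;> simp [abs_of_pos hlam]
      · rw [hA, hB, Finset.mul_sum, ← Finset.sum_add_distrib]
        refine Finset.sum_congr rfl fun i _ => ?_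
        dsimp only
        by_cases h : 0 ≤ gradF i
        · rw [if_pos h, abs_of_nonneg h]; ring
        · rw [if_neg h, abs_of_neg (lt_of_not_ge h)]; ring
    · rintro r ⟨v, hv, rfl⟩
      rw [hA, hB, Finset.mul_sum, ← Finset.sum_add_distrib]
      refine Finset.sum_le_sum fun i _ => ?_
      have h1 : -(v i * gradF i) ≤ (1 / lam) * |gradF i| := by
        calc -(v i * gradF i) ≤ |v i * gradF i| := neg_le_abs _
          _ = |v i| * |gradF i| := abs_mul _ _
          _ ≤ (1 / lam) * |gradF i| := by
              exact mul_le_mul_of_nonneg_right (hv i) (abs_nonneg _)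
      nlinarith [h1]
  rw [key.csSup_eq]
  have hL : ∑ i : Fin n, (-(lam * x i)) * gradF i = -lam * B := by
    rw [hB, Finset.mul_sum]; exact Finset.sum_congr rfl fun i _ => by ring
  rw [hL]
  constructor
  · intro h
    have : A = -lam * B := by field_simp at h ⊢; linarith
    linarith [this]
  · intro h
    have hA' : A = -lam * B := h.symm
    rw [hA']
    field_simp
    ring
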